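/- Let E be a complex Hilbert space, let H be a bounded selfadjoint operator on E with H² ≥ g²·1 for some g > 0, let D₀ be a bounded operator on E, and let κ > 0. For each t ∈ [0,1] let T_t be the bounded operator on the Hilbert space direct sum E ⊕ E given in block form by T_t = [[−H, tκD₀*], [tκD₀, H]]. Then T_t is selfadjoint and satisfies T_t² ≥ (g² − κ‖D₀H − HD₀‖)·1. In particular, if κ‖D₀H − HD₀‖ < g², then T_t is invertible for every t ∈ [0,1]. -/

import Mathlib

open ContinuousLinearMap in
/-- The block operator `[[A, B], [C, D]]` on the Hilbert space direct sum `E ⊕ F`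
(realized as `WithLp 2 (E × F)`), acting by `(x, y) ↦ (A x + B y, C x + D y)`. -/
noncomputable def blockOp {E F : Type*} [NormedAddCommGroup E] [InnerProductSpace ℂ E]
    [NormedAddCommGroup F] [InnerProductSpace ℂ F]
    (A : E →L[ℂ] E) (B : F →L[ℂ] E) (C : E →L[ℂ] F) (D : F →L[ℂ] F) :
    WithLp 2 (E × F) →L[ℂ] WithLp 2 (E × F) :=
  ((WithLp.prodContinuousLinearEquiv 2 ℂ E F).symm.toContinuousLinearMap.comp
    ((A.comp (fst ℂ E F) + B.comp (snd ℂ E F)).prod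
      (C.comp (fst ℂ E F) + D.comp (snd ℂ E F)))).comp
    (WithLp.prodContinuousLinearEquiv 2 ℂ E F).toContinuousLinearMap

section Aux

open scoped ComplexInnerProductSpace

variable {E : Type*} [NormedAddCommGroup E] [InnerProductSpace ℂ E] [CompleteSpace E]

set_option linter.unusedSectionVars false in
private lemma blockOp_fst' (A : E →L[ℂ] E) (B : E →L[ℂ] E) (C : E →L[ℂ] E) (D : E →L[ℂ] E)
    (x : WithLp 2 (E × E)) : (blockOp A B C D x).fst = A x.fst + B x.snd := rfl

set_option linter.unusedSectionVars false in
private lemma blockOp_snd' (A : E →L[ℂ] E) (B : E →L[ℂ] E) (C : E →L[ℂ] E) (D : E →L[ℂ] E)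
    (x : WithLp 2 (E × E)) : (blockOp A B C D x).snd = C x.fst + D x.snd := rfl

open ContinuousLinearMap in
private lemma aux_symm (H D₀ : E →L[ℂ] E) (hH : IsSelfAdjoint H) (s : ℝ) :
    IsSelfAdjoint (blockOp (-H) ((s : ℂ) • adjoint D₀) ((s : ℂ) • D₀) H) := by
  rw [isSelfAdjoint_iff_isSymmetric]
  intro x y
  have hHs := isSelfAdjoint_iff_isSymmetric.mp hH
  have hA : ∀ u v : E, ⟪H u, v⟫ = ⟪u, H v⟫ := fun u v => hHs u v
  simp only [ContinuousLinearMap.coe_coe, WithLp.prod_inner_apply, blockOp_fst', blockOp_snd',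
    ContinuousLinearMap.neg_apply, ContinuousLinearMap.smul_apply,
    inner_add_left, inner_add_right, inner_neg_left, inner_neg_right,
    inner_smul_left, inner_smul_right, Complex.conj_ofReal, WithLp.ofLp_fst, WithLp.ofLp_snd,
    adjoint_inner_left, adjoint_inner_right, hA]
  ring

open ContinuousLinearMap in
private lemma aux_bound (H D₀ : E →L[ℂ] E) (hH : IsSelfAdjoint H)
    (g : ℝ) (hH2 : ((g ^ 2 : ℝ) : ℂ) • (1 : E →L[ℂ] E) ≤ H ^ 2)
    (s : ℝ) (hs : 0 ≤ s) (x : WithLp 2 (E × E)) :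
    (g ^ 2 - s * ‖D₀ * H - H * D₀‖) * ‖x‖ ^ 2 ≤
      ‖blockOp (-H) ((s : ℂ) • adjoint D₀) ((s : ℂ) • D₀) H x‖ ^ 2 := by
  have hHs := isSelfAdjoint_iff_isSymmetric.mp hH
  have hA : ∀ u v : E, ⟪H u, v⟫ = ⟪u, H v⟫ := fun u v => hHs u v
  set a := x.fst
  set b := x.snd
  set K := D₀ * H - H * D₀ with hK
  have hself : ∀ v : E, (⟪v, v⟫ : ℂ).re = ‖v‖ ^ 2 := fun v => by
    rw [← RCLike.re_to_complex]; exact inner_self_eq_norm_sq v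
  -- lower bound ‖H v‖² ≥ g² ‖v‖²
  have hHv : ∀ v : E, g ^ 2 * ‖v‖ ^ 2 ≤ ‖H v‖ ^ 2 := by
    intro v
    have h := ((ContinuousLinearMap.le_def _ _).mp hH2).2 v
    rw [reApplyInnerSelf] at h
    have e : (H ^ 2 - ((g ^ 2 : ℝ) : ℂ) • (1 : E →L[ℂ] E)) v
        = H (H v) - ((g ^ 2 : ℝ) : ℂ) • v := by
      simp [pow_two, ContinuousLinearMap.mul_apply]
    rw [e, inner_sub_left, inner_smul_left, hA (H v) v, hA v (H v)] at h
    simp only [RCLike.re_to_complex, Complex.sub_re, Complex.conj_ofReal,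
      Complex.re_ofReal_mul] at h
    rw [← hA v (H v), hself (H v), hself v] at h
    linarith
  -- expand the norm square of the block operator applied to x
  have hnorm : ‖blockOp (-H) ((s : ℂ) • adjoint D₀) ((s : ℂ) • D₀) H x‖ ^ 2 =
      ‖(-H) a + ((s : ℂ) • adjoint D₀) b‖ ^ 2 + ‖((s : ℂ) • D₀) a + H b‖ ^ 2 := by
    rw [WithLp.prod_norm_sq_eq_of_L2, blockOp_fst', blockOp_snd']
  have i1 : ⟪(-H) a, ((s : ℂ) • adjoint D₀) b⟫ = (s : ℂ) * (-⟪D₀ (H a), b⟫) := by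
    simp only [ContinuousLinearMap.neg_apply, ContinuousLinearMap.smul_apply,
      inner_smul_right, adjoint_inner_right, map_neg, inner_neg_left]
  have i2 : ⟪((s : ℂ) • D₀) a, H b⟫ = (s : ℂ) * ⟪H (D₀ a), b⟫ := by
    simp only [ContinuousLinearMap.smul_apply, inner_smul_left, Complex.conj_ofReal, hA]
  have e1 : ‖(-H) a + ((s : ℂ) • adjoint D₀) b‖ ^ 2 =
      ‖H a‖ ^ 2 - 2 * (s * (⟪D₀ (H a), b⟫ : ℂ).re) + ‖((s : ℂ) • adjoint D₀) b‖ ^ 2 := by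
    rw [norm_add_sq (𝕜 := ℂ), i1]
    simp only [RCLike.re_to_complex, Complex.re_ofReal_mul, Complex.neg_re,
      ContinuousLinearMap.neg_apply, norm_neg]
    ring
  have e2 : ‖((s : ℂ) • D₀) a + H b‖ ^ 2 =
      ‖((s : ℂ) • D₀) a‖ ^ 2 + 2 * (s * (⟪H (D₀ a), b⟫ : ℂ).re) + ‖H b‖ ^ 2 := by
    rw [norm_add_sq (𝕜 := ℂ), i2]
    simp only [RCLike.re_to_complex, Complex.re_ofReal_mul]
  -- cross term estimate
  have hcross : (⟪D₀ (H a), b⟫ : ℂ).re - (⟪H (D₀ a), b⟫ : ℂ).re ≤ ‖K‖ * ‖a‖ * ‖b‖ := by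
    have hKa : (⟪K a, b⟫ : ℂ) = ⟪D₀ (H a), b⟫ - ⟪H (D₀ a), b⟫ := by
      simp [hK, ContinuousLinearMap.mul_apply, inner_sub_left]
    have h1 : (⟪K a, b⟫ : ℂ).re ≤ ‖(⟪K a, b⟫ : ℂ)‖ := Complex.re_le_norm _
    have h2 : ‖(⟪K a, b⟫ : ℂ)‖ ≤ ‖K a‖ * ‖b‖ := norm_inner_le_norm _ _
    have h3 : ‖K a‖ * ‖b‖ ≤ (‖K‖ * ‖a‖) * ‖b‖ :=
      mul_le_mul_of_nonneg_right (K.le_opNorm a) (norm_nonneg _)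
    have h4 := (h1.trans h2).trans h3
    rw [hKa, Complex.sub_re] at h4
    linarith
  have h2ab : 2 * (‖a‖ * ‖b‖) ≤ ‖a‖ ^ 2 + ‖b‖ ^ 2 := by nlinarith [sq_nonneg (‖a‖ - ‖b‖)]
  have hxn : ‖x‖ ^ 2 = ‖a‖ ^ 2 + ‖b‖ ^ 2 := WithLp.prod_norm_sq_eq_of_L2 x
  have hKn : (0 : ℝ) ≤ ‖K‖ := norm_nonneg _
  have hsq1 : (0 : ℝ) ≤ ‖((s : ℂ) • adjoint D₀) b‖ ^ 2 := sq_nonneg _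
  have hsq2 : (0 : ℝ) ≤ ‖((s : ℂ) • D₀) a‖ ^ 2 := sq_nonneg _
  rw [hnorm, e1, e2, hxn]
  nlinarith [hHv a, hHv b, mul_le_mul_of_nonneg_left hcross (by positivity : (0:ℝ) ≤ 2 * s),
    mul_le_mul_of_nonneg_left h2ab (by positivity : (0:ℝ) ≤ s * ‖K‖)]

end Aux

set_option maxHeartbeats 1000000 in
open scoped ComplexInnerProductSpace in
open ContinuousLinearMap in
/-- If `H` is a bounded selfadjoint operator with `H² ≥ g²·1`, `D₀` a bounded operator, `κ > 0`,
then for every `t ∈ [0,1]` the block operator `T_t = [[−H, tκD₀*], [tκD₀, H]]` is selfadjoint,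
satisfies `T_t² ≥ (g² − κ‖D₀H − HD₀‖)·1`, and is invertible if `κ‖D₀H − HD₀‖ < g²`. -/
theorem localizer_path_gap {E : Type*} [NormedAddCommGroup E] [InnerProductSpace ℂ E]
    [CompleteSpace E] (H D₀ : E →L[ℂ] E) (hH : IsSelfAdjoint H)
    (g : ℝ) (hg : 0 < g) (hH2 : ((g ^ 2 : ℝ) : ℂ) • (1 : E →L[ℂ] E) ≤ H ^ 2)
    (κ : ℝ) (hκ : 0 < κ) (t : ℝ) (ht : t ∈ Set.Icc (0 : ℝ) 1) :
    IsSelfAdjoint (blockOp (-H) (((t * κ : ℝ) : ℂ) • ContinuousLinearMap.adjoint D₀)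
        (((t * κ : ℝ) : ℂ) • D₀) H) ∧
    ((g ^ 2 - κ * ‖D₀ * H - H * D₀‖ : ℝ) : ℂ) •
        (1 : WithLp 2 (E × E) →L[ℂ] WithLp 2 (E × E)) ≤
      (blockOp (-H) (((t * κ : ℝ) : ℂ) • ContinuousLinearMap.adjoint D₀)
        (((t * κ : ℝ) : ℂ) • D₀) H) ^ 2 ∧
    (κ * ‖D₀ * H - H * D₀‖ < g ^ 2 →
      IsUnit (blockOp (-H) (((t * κ : ℝ) : ℂ) • ContinuousLinearMap.adjoint D₀)
        (((t * κ : ℝ) : ℂ) • D₀) H)) := by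
  obtain ⟨ht0, ht1⟩ := ht
  set s : ℝ := t * κ with hsdef
  have hs : 0 ≤ s := mul_nonneg ht0 hκ.le
  have hsκ : s ≤ κ := by
    calc s = t * κ := rfl
    _ ≤ 1 * κ := mul_le_mul_of_nonneg_right ht1 hκ.le
    _ = κ := one_mul κ
  set T := blockOp (-H) (((s : ℝ) : ℂ) • adjoint D₀) (((s : ℝ) : ℂ) • D₀) H with hTdef
  have hTsa : IsSelfAdjoint T := aux_symm H D₀ hH s
  have hTsym := isSelfAdjoint_iff_isSymmetric.mp hTsa
  set K := D₀ * H - H * D₀ with hK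
  have hself : ∀ v : WithLp 2 (E × E), (⟪v, v⟫ : ℂ).re = ‖v‖ ^ 2 := fun v => by
    rw [← RCLike.re_to_complex]; exact inner_self_eq_norm_sq v
  -- the norm lower bound with constant g² - κ‖K‖
  have hbound : ∀ x : WithLp 2 (E × E),
      (g ^ 2 - κ * ‖K‖) * ‖x‖ ^ 2 ≤ ‖T x‖ ^ 2 := by
    intro x
    refine le_trans ?_ (aux_bound H D₀ hH g hH2 s hs x)
    have : g ^ 2 - κ * ‖K‖ ≤ g ^ 2 - s * ‖K‖ := by
      have := mul_le_mul_of_nonneg_right hsκ (norm_nonneg K)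
      linarith
    exact mul_le_mul_of_nonneg_right this (sq_nonneg _)
  -- T² x inner products
  have hTsq : ∀ x : WithLp 2 (E × E), (⟪(T ^ 2) x, x⟫ : ℂ) = ⟪T x, T x⟫ := by
    intro x
    have h : (T ^ 2) x = T (T x) := by simp [pow_two, ContinuousLinearMap.mul_apply]
    rw [h]
    exact hTsym (T x) x
  refine ⟨hTsa, ?_, ?_⟩
  · rw [ContinuousLinearMap.le_def]
    constructor
    · have h1 : star (((g ^ 2 - κ * ‖K‖ : ℝ) : ℂ) •
          (1 : WithLp 2 (E × E) →L[ℂ] WithLp 2 (E × E)))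
          = ((g ^ 2 - κ * ‖K‖ : ℝ) : ℂ) • (1 : WithLp 2 (E × E) →L[ℂ] WithLp 2 (E × E)) := by
        rw [star_smul, star_one, Complex.star_def, Complex.conj_ofReal]
      exact isSelfAdjoint_iff_isSymmetric.mp ((hTsa.pow 2).sub h1)
    · intro x
      rw [reApplyInnerSelf, ContinuousLinearMap.sub_apply, inner_sub_left]
      simp only [RCLike.re_to_complex, Complex.sub_re]
      rw [hTsq x]
      have e2 : (⟪(((g ^ 2 - κ * ‖K‖ : ℝ) : ℂ) •
          (1 : WithLp 2 (E × E) →L[ℂ] WithLp 2 (E × E))) x, x⟫ : ℂ).re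
          = (g ^ 2 - κ * ‖K‖) * ‖x‖ ^ 2 := by
        rw [ContinuousLinearMap.smul_apply, ContinuousLinearMap.one_apply, inner_smul_left,
          Complex.conj_ofReal, Complex.re_ofReal_mul, hself x]
      rw [e2, hself (T x)]
      linarith [hbound x]
  · intro hlt
    have hc : (0 : ℝ) < g ^ 2 - κ * ‖K‖ := by linarith
    have hTsq_unit : IsUnit (T ^ 2) := by
      refine isUnit_of_forall_le_norm_inner_map (T ^ 2) (c := ⟨g ^ 2 - κ * ‖K‖, hc.le⟩)
        (by exact_mod_cast hc) fun x => ?_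
      rw [hTsq x, inner_self_eq_norm_sq_to_K, ← RCLike.ofReal_pow, RCLike.norm_ofReal,
        abs_of_nonneg (sq_nonneg _)]
      calc ‖x‖ ^ 2 * (⟨g ^ 2 - κ * ‖K‖, hc.le⟩ : NNReal) = (g ^ 2 - κ * ‖K‖) * ‖x‖ ^ 2 := by
            simp [mul_comm]
      _ ≤ ‖T x‖ ^ 2 := hbound x
    obtain ⟨u, hu⟩ := hTsq_unit
    have hcomm : Commute T (u : WithLp 2 (E × E) →L[ℂ] WithLp 2 (E × E)) := by
      rw [hu]; exact (Commute.refl T).pow_right 2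
    have hcomm' : Commute T ((u⁻¹ : _ˣ) : WithLp 2 (E × E) →L[ℂ] WithLp 2 (E × E)) :=
      hcomm.units_inv_right
    refine ⟨⟨T, ((u⁻¹ : _ˣ) : _) * T, ?_, ?_⟩, rfl⟩
    · calc T * (((u⁻¹ : _ˣ) : _) * T) = (T * ((u⁻¹ : _ˣ) : _)) * T := by rw [mul_assoc]
      _ = (((u⁻¹ : _ˣ) : _) * T) * T := by rw [hcomm'.eq]
      _ = ((u⁻¹ : _ˣ) : _) * (T ^ 2) := by rw [mul_assoc, ← pow_two]
      _ = ((u⁻¹ : _ˣ) : _) * (u : _) := by rw [hu]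
      _ = 1 := u.inv_mul
    · calc (((u⁻¹ : _ˣ) : _) * T) * T = ((u⁻¹ : _ˣ) : _) * (T ^ 2) := by rw [mul_assoc, ← pow_two]
      _ = ((u⁻¹ : _ˣ) : _) * (u : _) := by rw [hu]
      _ = 1 := u.inv_mul
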